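/- Let F be a tree set and w ∈ F. If U is a finite Fw⁻¹-maximal suffix code and V is a finite w⁻¹F-maximal prefix code, then the generalized extension graph G_{U,V}(w) is a tree (connected and acyclic). -/

import Mathlib

open List

variable {A : Type*}

/-- The `n`-th power `wⁿ` of a word (concatenation). -/
def wordPow (w : List A) (n : ℕ) : List A := (List.replicate n w).flatten

/-- A set of words is factorial if it contains the factors of its elements. -/
def Factorial (F : Set (List A)) : Prop := ∀ ⦃u v : List A⦄, u ∈ F → v <:+: u → v ∈ F

/-- A set of words is recurrent if it is factorial and any two of its words
occur in a common word of the set, in a prescribed order. -/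
def Recurrent (F : Set (List A)) : Prop :=
  Factorial F ∧ ∀ u ∈ F, ∀ w ∈ F, ∃ v : List A, u ++ v ++ w ∈ F

/-- A set of words is uniformly recurrent if it is factorial, right-essential, and
every word of the set occurs in all long enough words of the set. -/
def UniformlyRecurrent (F : Set (List A)) : Prop :=
  Factorial F ∧ (∀ w ∈ F, ∃ a : A, w ++ [a] ∈ F) ∧
    ∀ u ∈ F, ∃ n ≥ 1, ∀ w ∈ F, w.length = n → u <:+: w

/-- A set of words is periodic if it is the set of factors of the powers of a single word. -/
def Periodic (F : Set (List A)) : Prop :=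
  ∃ w : List A, F = {v | ∃ n : ℕ, v <:+: wordPow w n}

/-- `L(w)`, the set of left extensions of `w` in `F`. -/
def LeftExt (F : Set (List A)) (w : List A) : Set A := {a | a :: w ∈ F}

/-- `R(w)`, the set of right extensions of `w` in `F`. -/
def RightExt (F : Set (List A)) (w : List A) : Set A := {a | w ++ [a] ∈ F}

/-- A word is left-special if it has at least two left extensions. -/
def LeftSpecial (F : Set (List A)) (w : List A) : Prop := 2 ≤ (LeftExt F w).ncard

/-- A word is right-special if it has at least two right extensions. -/
def RightSpecial (F : Set (List A)) (w : List A) : Prop := 2 ≤ (RightExt F w).ncard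

/-- A word is bispecial if it is both left-special and right-special. -/
def Bispecial (F : Set (List A)) (w : List A) : Prop := LeftSpecial F w ∧ RightSpecial F w

/-- A set of words is biessential if it is factorial and every one of its words is
biextendable. -/
def Biessential (F : Set (List A)) : Prop :=
  Factorial F ∧ ∀ w ∈ F, ∃ a b : A, a :: (w ++ [b]) ∈ F

/-- The bipartite (simple, undirected) graph on `α ⊕ β` induced by a relation
`E : α → β → Prop`. -/
def bipGraph {α β : Type*} (E : α → β → Prop) : SimpleGraph (α ⊕ β) where
  Adj x y := ∃ a b, E a b ∧ ((x = Sum.inl a ∧ y = Sum.inr b) ∨ (x = Sum.inr b ∧ y = Sum.inl a))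
  symm := by
    constructor
    rintro x y ⟨a, b, h, hc⟩
    exact ⟨a, b, h, by tauto⟩
  loopless := by
    constructor
    rintro x ⟨a, b, h, hc⟩
    rcases hc with ⟨h1, h2⟩ | ⟨h1, h2⟩ <;> simp_all

/-- The extension graph `G(w)` of a word `w`: the bipartite graph on
`L(w) ⊔ R(w)` with an edge between `a` and `b` iff `awb ∈ F`. -/
def extensionGraph (F : Set (List A)) (w : List A) :
    SimpleGraph ({a : A // a ∈ LeftExt F w} ⊕ {b : A // b ∈ RightExt F w}) :=
  bipGraph (fun a b => a.1 :: (w ++ [b.1]) ∈ F)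

/-- A tree set: a biessential set all of whose extension graphs are trees. -/
def IsTreeSet (F : Set (List A)) : Prop :=
  Biessential F ∧ ∀ w ∈ F, (extensionGraph F w).IsTree

/-- The generalized extension graph `G_{U,V}(w)`: the bipartite graph on
`U(w) ⊔ V(w)` with an edge between `ℓ` and `r` iff `ℓwr ∈ F`. -/
def genExtGraph (F : Set (List A)) (U V : Set (List A)) (w : List A) :
    SimpleGraph ({l : List A // l ∈ U ∧ l ++ w ∈ F} ⊕ {r : List A // r ∈ V ∧ w ++ r ∈ F}) :=
  bipGraph (fun l r => l.1 ++ w ++ r.1 ∈ F)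

/-- A prefix code: a set of nonempty words none of which is a proper prefix of another. -/
def IsPrefixCode (U : Set (List A)) : Prop :=
  (∀ u ∈ U, u ≠ []) ∧ ∀ u ∈ U, ∀ v ∈ U, u <+: v → u = v

/-- A suffix code: a set of nonempty words none of which is a proper suffix of another. -/
def IsSuffixCode (U : Set (List A)) : Prop :=
  (∀ u ∈ U, u ≠ []) ∧ ∀ u ∈ U, ∀ v ∈ U, u <:+ v → u = v

/-- An `S`-maximal prefix code: a prefix code contained in `S` and not properly contained
in any prefix code contained in `S`. -/
def IsMaximalPrefixCodeIn (S U : Set (List A)) : Prop :=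
  IsPrefixCode U ∧ U ⊆ S ∧ ∀ W, IsPrefixCode W → W ⊆ S → U ⊆ W → U = W

/-- An `S`-maximal suffix code. -/
def IsMaximalSuffixCodeIn (S U : Set (List A)) : Prop :=
  IsSuffixCode U ∧ U ⊆ S ∧ ∀ W, IsSuffixCode W → W ⊆ S → U ⊆ W → U = W

/-- `Γ_F(x)`, the set of right return words to `x` in `F`. -/
def ReturnWords (F : Set (List A)) (x : List A) : Set (List A) :=
  {r | r ≠ [] ∧ x ++ r ∈ F ∧ ∃ s : List A, s ≠ [] ∧ x ++ r = s ++ x}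

/-- `R_F(x) = Γ_F(x) \ Γ_F(x)A⁺`, the set of first right return words to `x` in `F`. -/
def FirstReturnWords (F : Set (List A)) (x : List A) : Set (List A) :=
  ReturnWords F x \ {r | ∃ r' ∈ ReturnWords F x, ∃ s : List A, s ≠ [] ∧ r = r' ++ s}

/-- The natural map from words to the free group. -/
def wordToFree (w : List A) : FreeGroup A := (w.map FreeGroup.of).prod

/-- `x` is unioccurrent in `y` if `x` occurs exactly once in `y`. -/
def Unioccurrent (x y : List A) : Prop := ∃! p : List A × List A, y = p.1 ++ x ++ p.2

/-- Vertices of the Rauzy graph `G_n`: words of `F` of length `n`. -/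
def RauzyVertex (F : Set (List A)) (n : ℕ) := {w : List A // w ∈ F ∧ w.length = n}

/-- Edges of the Rauzy graph `G_n`: an edge from `x` to `y` labeled `a` whenever
`xa ∈ F ∩ Ay`. -/
def RauzyEdge (F : Set (List A)) (n : ℕ) (x : RauzyVertex F n) (a : A)
    (y : RauzyVertex F n) : Prop :=
  x.1 ++ [a] ∈ F ∧ ∃ b : A, x.1 ++ [a] = b :: y.1

/-- `GenPathLabel E p q g` holds when there is a generalized path (a path which may
traverse edges forwards or backwards) from `p` to `q` in the `A`-labeled graph with
edge relation `E`, whose label (product of contributions in the free group) is `g`. -/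
inductive GenPathLabel {V : Type*} (E : V → A → V → Prop) : V → V → FreeGroup A → Prop
  | nil (v : V) : GenPathLabel E v v 1
  | fwd {p q r : V} {g : FreeGroup A} {a : A} :
      GenPathLabel E p q g → E q a r → GenPathLabel E p r (g * FreeGroup.of a)
  | bwd {p q r : V} {g : FreeGroup A} {a : A} :
      GenPathLabel E p q g → E r a q → GenPathLabel E p r (g * (FreeGroup.of a)⁻¹)

/-- A vertex of a Rauzy graph is special if the corresponding word is left-special
or right-special. -/
def SpecialWord (F : Set (List A)) (w : List A) : Prop := LeftSpecial F w ∨ RightSpecial F w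

/-- Nonempty directed paths in the Rauzy graph `G_n` all of whose intermediate
vertices are non-special, together with their labels. -/
inductive NSPath (F : Set (List A)) (n : ℕ) : RauzyVertex F n → RauzyVertex F n → List A → Prop
  | single {p q : RauzyVertex F n} {a : A} : RauzyEdge F n p a q → NSPath F n p q [a]
  | cons {p q r : RauzyVertex F n} {a : A} {l : List A} :
      RauzyEdge F n p a q → ¬ SpecialWord F q.1 → NSPath F n q r l → NSPath F n p r (a :: l)

/-- The Rauzy graph `G_n` is of the first infinite type with respect to the special
vertices `x, y` and the words `u, v, w, t`: `x` and `y` are the only special vertices and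
the simple directed paths between them with non-special intermediate vertices are exactly
`x → x` labeled `u`, `x → y` labeled `v`, `y → y` labeled `w` and `y → x` labeled `t`. -/
def FirstInfiniteType (F : Set (List A)) (n : ℕ) (x y : RauzyVertex F n)
    (u v w t : List A) : Prop :=
  x ≠ y ∧ SpecialWord F x.1 ∧ SpecialWord F y.1 ∧
    (∀ z : RauzyVertex F n, SpecialWord F z.1 → z = x ∨ z = y) ∧
    (∀ p q : RauzyVertex F n, (p = x ∨ p = y) → (q = x ∨ q = y) → ∀ l : List A,
      (NSPath F n p q l ↔ ((p = x ∧ q = x ∧ l = u) ∨ (p = x ∧ q = y ∧ l = v) ∨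
        (p = y ∧ q = y ∧ l = w) ∨ (p = y ∧ q = x ∧ l = t))))

open List SimpleGraph

section Graph

variable {V : Type*}

/-- Transfer reachability along a map that sends edges to reachable pairs. -/
lemma reachable_of_adj_reachable {V' : Type*} {G : SimpleGraph V} {H : SimpleGraph V'}
    (f : V → V') (hf : ∀ a b, G.Adj a b → H.Reachable (f a) (f b)) {x y : V}
    (h : G.Reachable x y) : H.Reachable (f x) (f y) := by
  obtain ⟨p⟩ := h
  induction p with
  | nil => exact Reachable.refl _
  | cons h p ih => exact (hf _ _ h).trans ih

/-- A connected graph has at least `card V - 1` edges. -/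
lemma card_le_card_edge_add_one [Finite V] :
    ∀ (n : ℕ) (G : SimpleGraph V), Nat.card G.edgeSet = n → G.Connected →
      Nat.card V ≤ n + 1 := by
  intro n
  induction n using Nat.strong_induction_on with
  | _ n IH =>
    intro G hcard hconn
    classical
    by_cases hac : G.IsAcyclic
    · have htree : G.IsTree := ⟨hconn, hac⟩
      haveI : Fintype V := Fintype.ofFinite V
      haveI : Fintype G.edgeSet := Fintype.ofFinite _
      have := htree.card_edgeFinset
      rw [← hcard, Nat.card_eq_fintype_card (α := V), ← this, Nat.card_eq_fintype_card,
        SimpleGraph.edgeFinset_card]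
    · rw [isAcyclic_iff_forall_adj_isBridge] at hac
      push_neg at hac
      obtain ⟨v, w, hadj, hbr⟩ := hac
      set G₂ := G \ fromEdgeSet {s(v, w)} with hG₂
      have hreach : G₂.Reachable v w := by
        by_contra hre
        exact hbr hre
      have hconn₂ : G₂.Connected := by
        have hne : Nonempty V := hconn.nonempty
        constructor
        intro a b
        refine reachable_of_adj_reachable (G := G) id ?_ (hconn a b)
        intro a b hab
        by_cases he : s(a, b) = s(v, w)
        · rw [Sym2.eq_iff] at he
          rcases he with ⟨rfl, rfl⟩ | ⟨rfl, rfl⟩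
          · exact hreach
          · exact hreach.symm
        · exact Adj.reachable (by simp [hG₂, hab, he])
      have hes : G₂.edgeSet = G.edgeSet \ {s(v, w)} := by
        simp [hG₂]
      have hmem : s(v, w) ∈ G.edgeSet := hadj
      have hn1 : 1 ≤ n := by
        rw [← hcard, Nat.card_coe_set_eq]
        exact (Set.ncard_pos (Set.toFinite _)).2 ⟨_, hmem⟩
      have hcard₂ : Nat.card G₂.edgeSet = n - 1 := by
        rw [Nat.card_coe_set_eq, hes, Set.ncard_diff_singleton_of_mem hmem,
          ← Nat.card_coe_set_eq, hcard]
      have := IH (n - 1) (by omega) G₂ hcard₂ hconn₂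
      omega

/-- A connected graph with `card V - 1` edges is a tree. -/
lemma isTree_of_connected_of_card [Finite V] {G : SimpleGraph V}
    (hconn : G.Connected) (hcard : Nat.card G.edgeSet + 1 = Nat.card V) : G.IsTree := by
  classical
  refine ⟨hconn, ?_⟩
  by_contra hac
  rw [isAcyclic_iff_forall_adj_isBridge] at hac
  push_neg at hac
  obtain ⟨v, w, hadj, hbr⟩ := hac
  set G₂ := G \ fromEdgeSet {s(v, w)} with hG₂
  have hreach : G₂.Reachable v w := by
    by_contra hre
    exact hbr hre
  have hconn₂ : G₂.Connected := by
    have hne : Nonempty V := hconn.nonempty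
    constructor
    intro a b
    refine reachable_of_adj_reachable (G := G) id ?_ (hconn a b)
    intro a b hab
    by_cases he : s(a, b) = s(v, w)
    · rw [Sym2.eq_iff] at he
      rcases he with ⟨rfl, rfl⟩ | ⟨rfl, rfl⟩
      · exact hreach
      · exact hreach.symm
    · exact Adj.reachable (by simp [hG₂, hab, he])
  have hes : G₂.edgeSet = G.edgeSet \ {s(v, w)} := by simp [hG₂]
  have hmem : s(v, w) ∈ G.edgeSet := hadj
  have hn1 : 1 ≤ Nat.card G.edgeSet := by
    rw [Nat.card_coe_set_eq]
    exact (Set.ncard_pos (Set.toFinite _)).2 ⟨_, hmem⟩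
  have hcard₂ : Nat.card G₂.edgeSet = Nat.card G.edgeSet - 1 := by
    rw [Nat.card_coe_set_eq, hes, Set.ncard_diff_singleton_of_mem hmem,
      ← Nat.card_coe_set_eq]
  have := card_le_card_edge_add_one _ G₂ hcard₂ hconn₂
  omega

/-- The edge count of a finite tree. -/
lemma tree_nat_card_edge {G : SimpleGraph V} [Finite V] (h : G.IsTree) :
    Nat.card G.edgeSet + 1 = Nat.card V := by
  classical
  haveI : Fintype V := Fintype.ofFinite V
  haveI : Fintype G.edgeSet := Fintype.ofFinite _
  have := h.card_edgeFinset
  rw [Nat.card_eq_fintype_card, Nat.card_eq_fintype_card (α := V), ← this,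
    SimpleGraph.edgeFinset_card]

/-- Transfer `IsTree` along an isomorphism. -/
lemma isTree_of_iso {V' : Type*} {G : SimpleGraph V} {H : SimpleGraph V'}
    (e : G ≃g H) (h : G.IsTree) : H.IsTree := by
  refine ⟨e.connected_iff.1 h.isConnected, ?_⟩
  intro v c hc
  have hinj : Function.Injective (e.symm.toHom : V' → V) := e.symm.toEquiv.injective
  exact h.IsAcyclic (c.map e.symm.toHom)
    ((SimpleGraph.Walk.map_isCycle_iff_of_injective hinj).2 hc)

end Graph
section Bip
variable {α β α' β' : Type*} {E : α → β → Prop} {E' : α' → β' → Prop}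

lemma bipGraph_adj_inl_inr {a : α} {b : β} : (bipGraph E).Adj (Sum.inl a) (Sum.inr b) ↔ E a b := by
  constructor
  · rintro ⟨a', b', h, ⟨h1, h2⟩ | ⟨h1, h2⟩⟩ <;> simp_all
  · intro h; exact ⟨a, b, h, Or.inl ⟨rfl, rfl⟩⟩

lemma bipGraph_adj_inr_inl {a : α} {b : β} : (bipGraph E).Adj (Sum.inr b) (Sum.inl a) ↔ E a b := by
  rw [SimpleGraph.adj_comm, bipGraph_adj_inl_inr]

lemma bipGraph_not_adj_inl_inl {a a' : α} : ¬ (bipGraph E).Adj (Sum.inl a) (Sum.inl a') := by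
  rintro ⟨c, d, h, ⟨h1, h2⟩ | ⟨h1, h2⟩⟩ <;> simp_all

lemma bipGraph_not_adj_inr_inr {b b' : β} : ¬ (bipGraph E).Adj (Sum.inr b) (Sum.inr b') := by
  rintro ⟨c, d, h, ⟨h1, h2⟩ | ⟨h1, h2⟩⟩ <;> simp_all

lemma bipGraph_adj_cases {x y : α ⊕ β} (h : (bipGraph E).Adj x y) :
    (∃ a b, E a b ∧ x = Sum.inl a ∧ y = Sum.inr b) ∨
      (∃ a b, E a b ∧ x = Sum.inr b ∧ y = Sum.inl a) := by
  obtain ⟨a, b, h, hc⟩ := h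
  rcases hc with ⟨h1, h2⟩ | ⟨h1, h2⟩
  · exact Or.inl ⟨a, b, h, h1, h2⟩
  · exact Or.inr ⟨a, b, h, h1, h2⟩

lemma bipGraph_edge_card :
    Nat.card (bipGraph E).edgeSet = Nat.card {p : α × β // E p.1 p.2} := by
  refine (Nat.card_eq_of_bijective
    (fun p => ⟨s(Sum.inl p.1.1, Sum.inr p.1.2), bipGraph_adj_inl_inr.2 p.2⟩) ⟨?_, ?_⟩).symm
  · rintro ⟨⟨a, b⟩, h⟩ ⟨⟨a', b'⟩, h'⟩ hee
    simp only [Subtype.mk.injEq, Subtype.ext_iff, Sym2.eq_iff] at hee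
    rcases hee with ⟨h1, h2⟩ | ⟨h1, h2⟩ <;> simp_all
  · rintro ⟨e, he⟩
    induction e with
    | _ x y =>
      rcases bipGraph_adj_cases he with ⟨a, b, h, rfl, rfl⟩ | ⟨a, b, h, rfl, rfl⟩
      · exact ⟨⟨(a, b), h⟩, rfl⟩
      · exact ⟨⟨(a, b), h⟩, Subtype.ext (Sym2.eq_swap)⟩

/-- Isomorphism of bipartite graphs from compatible equivalences of the parts. -/
def bipIso (ea : α ≃ α') (eb : β ≃ β') (h : ∀ a b, E a b ↔ E' (ea a) (eb b)) :
    bipGraph E ≃g bipGraph E' := by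
  refine ⟨Equiv.sumCongr ea eb, ?_⟩
  rintro (a | b) (a' | b') <;>
    simp [bipGraph_adj_inl_inr, bipGraph_adj_inr_inl, bipGraph_not_adj_inl_inl,
      bipGraph_not_adj_inr_inr, h _ _]

/-- Isomorphism of bipartite graphs swapping the parts. -/
def bipIsoSwap (ea : α ≃ β') (eb : β ≃ α') (h : ∀ a b, E a b ↔ E' (eb b) (ea a)) :
    bipGraph E ≃g bipGraph E' := by
  refine ⟨(Equiv.sumCongr ea eb).trans (Equiv.sumComm β' α'), ?_⟩
  rintro (a | b) (a' | b') <;>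
    simp [bipGraph_adj_inl_inr, bipGraph_adj_inr_inl, bipGraph_not_adj_inl_inl,
      bipGraph_not_adj_inr_inr, h _ _]

end Bip
section Words

variable {F : Set (List A)} {w : List A} {U V : Set (List A)}

lemma fac_mem (hFac : Factorial F) {x : List A} (hx : x ∈ F) (s y t : List A)
    (h : s ++ y ++ t = x) : y ∈ F := hFac hx ⟨s, t, h⟩

lemma be_right (hBE : Biessential F) (hw : w ∈ F) : ∃ b, w ++ [b] ∈ F := by
  obtain ⟨a, b, h⟩ := hBE.2 w hw
  exact ⟨b, fac_mem hBE.1 h [a] _ [] (by simp)⟩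

lemma be_left (hBE : Biessential F) (hw : w ∈ F) : ∃ a, a :: w ∈ F := by
  obtain ⟨a, b, h⟩ := hBE.2 w hw
  exact ⟨a, fac_mem hBE.1 h [] _ [b] (by simp)⟩

lemma be_right_len (hBE : Biessential F) (hw : w ∈ F) :
    ∀ n, ∃ z : List A, z.length = n ∧ w ++ z ∈ F := by
  intro n
  induction n with
  | zero => exact ⟨[], rfl, by simpa using hw⟩
  | succ n ih =>
    obtain ⟨z, hlen, hz⟩ := ih
    obtain ⟨b, hb⟩ := be_right hBE hz
    exact ⟨z ++ [b], by simp [hlen], by simpa [List.append_assoc] using hb⟩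

/-- A maximal prefix code is nonempty. -/
lemma pc_nonempty (hBE : Biessential F) (hw : w ∈ F)
    (hV : IsMaximalPrefixCodeIn {p | w ++ p ∈ F} V) : V.Nonempty := by
  rcases Set.eq_empty_or_nonempty V with rfl | h
  · obtain ⟨b, hb⟩ := be_right hBE hw
    have := hV.2.2 {[b]} ⟨by simp, by intro u hu v hv _; simp_all⟩
      (by intro u hu; simp_all) (Set.empty_subset _)
    exact (Set.singleton_ne_empty [b] this.symm).elim
  · exact h

/-- Every long enough right extension has a prefix in a maximal prefix code. -/
lemma pc_long (hV : IsMaximalPrefixCodeIn {p | w ++ p ∈ F} V) (hVne : V.Nonempty)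
    {z : List A} (hz : w ++ z ∈ F) (hlen : ∀ v ∈ V, v.length ≤ z.length) :
    ∃ v ∈ V, v <+: z := by
  by_contra hno
  push_neg at hno
  have hzV : z ∉ V := fun h => hno z h (List.prefix_refl z)
  have hcode : IsPrefixCode (insert z V) := by
    constructor
    · intro u hu
      rcases Set.mem_insert_iff.1 hu with rfl | hu
      · obtain ⟨v₀, hv₀⟩ := hVne
        have h1 : v₀ ≠ [] := hV.1.1 v₀ hv₀
        have h2 := hlen v₀ hv₀
        intro h
        subst h
        simp only [List.length_nil, Nat.le_zero, List.length_eq_zero_iff] at h2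
        exact h1 h2
      · exact hV.1.1 u hu
    · intro u hu v hv hpre
      rcases Set.mem_insert_iff.1 hu with rfl | hu'
      · rcases Set.mem_insert_iff.1 hv with rfl | hv'
        · rfl
        · exact hpre.eq_of_length (le_antisymm hpre.length_le (hlen v hv'))
      · rcases Set.mem_insert_iff.1 hv with rfl | hv'
        · exact absurd hpre (hno u hu')
        · exact hV.1.2 u hu' v hv' hpre
  have := hV.2.2 _ hcode
    (by
      intro u hu
      rcases Set.mem_insert_iff.1 hu with rfl | hu
      · exact hz
      · exact hV.2.1 hu)
    (Set.subset_insert _ _)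
  exact hzV (this ▸ Set.mem_insert z V)

/-- Any word of `F` ending in `w` can be extended on the right by an element of `V`. -/
lemma pc_ext (hBE : Biessential F) (hVfin : V.Finite)
    (hV : IsMaximalPrefixCodeIn {p | w ++ p ∈ F} V) {g : List A}
    (hg : g ∈ F) (hsuf : w <:+ g) : ∃ v ∈ V, g ++ v ∈ F := by
  obtain ⟨t, rfl⟩ := hsuf
  have hw : w ∈ F := fac_mem hBE.1 hg t w [] (by simp)
  obtain ⟨z, hzlen, hz⟩ := be_right_len hBE hg (hVfin.toFinset.sup List.length)
  have hwz : w ++ z ∈ F := fac_mem hBE.1 hz t (w ++ z) [] (by simp)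
  obtain ⟨v, hvV, t2, rfl⟩ := pc_long hV (pc_nonempty hBE hw hV) hwz
    (by
      intro v hv
      rw [hzlen]
      exact Finset.le_sup (hVfin.mem_toFinset.2 hv))
  exact ⟨v, hvV, fac_mem hBE.1 hz [] (t ++ w ++ v) t2 (by simp)⟩

/-- Restriction of a maximal prefix code to left extensions of the base word. -/
lemma pc_restrict (hBE : Biessential F) (hVfin : V.Finite)
    (hV : IsMaximalPrefixCodeIn {p | w ++ p ∈ F} V) {m : List A} (hm : m ++ w ∈ F) :
    IsMaximalPrefixCodeIn {p | (m ++ w) ++ p ∈ F} {v | v ∈ V ∧ (m ++ w) ++ v ∈ F} := by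
  refine ⟨⟨fun u hu => hV.1.1 u hu.1, fun u hu v hv h => hV.1.2 u hu.1 v hv.1 h⟩,
    fun v hv => hv.2, ?_⟩
  intro W hWcode hWS hsub
  refine le_antisymm hsub ?_
  intro x hx
  have hx' : (m ++ w) ++ x ∈ F := hWS hx
  obtain ⟨z, hzlen, hz⟩ := be_right_len hBE hx' (hVfin.toFinset.sup List.length)
  have hwxz : w ++ (x ++ z) ∈ F := fac_mem hBE.1 hz m (w ++ (x ++ z)) [] (by simp)
  have hw : w ∈ F := fac_mem hBE.1 hm m w [] (by simp)
  obtain ⟨v, hvV, hvpre⟩ := pc_long hV (pc_nonempty hBE hw hV) hwxz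
    (by
      intro v hv
      have := Finset.le_sup (f := List.length) (hVfin.mem_toFinset.2 hv)
      simp only [List.length_append]
      omega)
  obtain ⟨t2, ht2⟩ := id hvpre
  have hvVm : v ∈ {v | v ∈ V ∧ (m ++ w) ++ v ∈ F} :=
    ⟨hvV, fac_mem hBE.1 hz [] ((m ++ w) ++ v) t2 (by simp [List.append_assoc, ht2])⟩
  rcases List.prefix_or_prefix_of_prefix hvpre (List.prefix_append x z) with h | h
  · exact (hWcode.2 v (hsub hvVm) x hx h) ▸ hvVm
  · exact (hWcode.2 x hx v (hsub hvVm) h).symm ▸ hvVm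

/-- The set of one-letter left extensions, as a suffix code. -/
def sufLetters (F : Set (List A)) (x : List A) : Set (List A) :=
  {l | ∃ a : A, l = [a] ∧ l ++ x ∈ F}

/-- The set of one-letter right extensions, as a prefix code. -/
def preLetters (F : Set (List A)) (x : List A) : Set (List A) :=
  {l | ∃ a : A, l = [a] ∧ x ++ l ∈ F}

lemma sufLetters_max (hFac : Factorial F) (x : List A) :
    IsMaximalSuffixCodeIn {s | s ++ x ∈ F} (sufLetters F x) := by
  refine ⟨⟨?_, ?_⟩, ?_, ?_⟩
  · rintro u ⟨a, rfl, _⟩; simp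
  · rintro u ⟨a, rfl, _⟩ v ⟨b, rfl, _⟩ h
    exact h.eq_of_length (by simp)
  · rintro u ⟨a, rfl, h⟩; exact h
  · intro W hWcode hWS hsub
    refine le_antisymm hsub ?_
    intro y hy
    have hyne : y ≠ [] := hWcode.1 y hy
    rcases List.eq_nil_or_concat y with rfl | ⟨ys, c, rfl⟩
    · exact absurd rfl hyne
    · rw [List.concat_eq_append] at hy ⊢
      have hc : [c] ∈ sufLetters F x :=
        ⟨c, rfl, fac_mem hFac (hWS hy) ys ([c] ++ x) [] (by simp)⟩
      have := hWcode.2 [c] (hsub hc) _ hy ⟨ys, rfl⟩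
      rw [← this]
      exact hc

lemma preLetters_max (hFac : Factorial F) (x : List A) :
    IsMaximalPrefixCodeIn {p | x ++ p ∈ F} (preLetters F x) := by
  refine ⟨⟨?_, ?_⟩, ?_, ?_⟩
  · rintro u ⟨a, rfl, _⟩; simp
  · rintro u ⟨a, rfl, _⟩ v ⟨b, rfl, _⟩ h
    exact h.eq_of_length (by simp)
  · rintro u ⟨a, rfl, h⟩; exact h
  · intro W hWcode hWS hsub
    refine le_antisymm hsub ?_
    intro y hy
    have hyne : y ≠ [] := hWcode.1 y hy
    rcases y with _ | ⟨c, ys⟩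
    · exact absurd rfl hyne
    · have hc : [c] ∈ preLetters F x :=
        ⟨c, rfl, fac_mem hFac (hWS hy) [] (x ++ [c]) ys (by simp)⟩
      have := hWcode.2 [c] (hsub hc) _ hy ⟨ys, rfl⟩
      rw [← this]
      exact hc

lemma suffix_code_singletons (hFac : Factorial F)
    (hU : IsMaximalSuffixCodeIn {s | s ++ w ∈ F} U)
    (hlen : ∀ u ∈ U, u.length = 1) : U = sufLetters F w := by
  have hsub : U ⊆ sufLetters F w := by
    intro u hu
    have h1 := hlen u hu
    rcases u with _ | ⟨a, _ | ⟨b, t⟩⟩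
    · simp at h1
    · exact ⟨a, rfl, hU.2.1 hu⟩
    · simp at h1
  exact hU.2.2 _ (sufLetters_max hFac w).1 (sufLetters_max hFac w).2.1 hsub

lemma prefix_code_singletons (hFac : Factorial F)
    (hV : IsMaximalPrefixCodeIn {p | w ++ p ∈ F} V)
    (hlen : ∀ v ∈ V, v.length = 1) : V = preLetters F w := by
  have hsub : V ⊆ preLetters F w := by
    intro u hu
    have h1 := hlen u hu
    rcases u with _ | ⟨a, _ | ⟨b, t⟩⟩
    · simp at h1
    · exact ⟨a, rfl, hV.2.1 hu⟩
    · simp at h1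
  exact hV.2.2 _ (preLetters_max hFac w).1 (preLetters_max hFac w).2.1 hsub

end Words
section Surgery

variable {F : Set (List A)} {w : List A} {U : Set (List A)} {a : A} {m : List A}

lemma m_not_mem (hU : IsMaximalSuffixCodeIn {s | s ++ w ∈ F} U) (hu₀ : a :: m ∈ U) :
    m ∉ U := by
  intro hm
  exact (List.cons_ne_self a m) (hU.1.2 m hm (a :: m) hu₀ ⟨[a], rfl⟩).symm

lemma ext_letter_mem (hU : IsMaximalSuffixCodeIn {s | s ++ w ∈ F} U) (hu₀ : a :: m ∈ U)
    (hmaxlen : ∀ u ∈ U, u.length ≤ m.length + 1) :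
    ∀ c : A, (c :: m) ++ w ∈ F → c :: m ∈ U := by
  intro c hc
  have hcode : IsSuffixCode (insert (c :: m) U) := by
    constructor
    · intro u hu
      rcases Set.mem_insert_iff.1 hu with rfl | hu'
      · simp
      · exact hU.1.1 u hu'
    · intro u hu v hv hsuf
      rcases Set.mem_insert_iff.1 hu with rfl | hu'
      · rcases Set.mem_insert_iff.1 hv with rfl | hv'
        · rfl
        · exact hsuf.eq_of_length
            (le_antisymm hsuf.length_le (by simpa using hmaxlen v hv'))
      · rcases Set.mem_insert_iff.1 hv with rfl | hv'
        · rcases List.suffix_cons_iff.1 hsuf with rfl | h2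
          · rfl
          · have : u = a :: m := hU.1.2 u hu' (a :: m) hu₀ (h2.trans (List.suffix_cons a m))
            have hlen := h2.length_le
            subst this
            simp at hlen
        · exact hU.1.2 u hu' v hv' hsuf
  have := hU.2.2 _ hcode
    (by
      intro u hu
      rcases Set.mem_insert_iff.1 hu with rfl | hu'
      · exact hc
      · exact hU.2.1 hu')
    (Set.subset_insert _ _)
  exact this ▸ Set.mem_insert _ _

lemma U'_max (hFac : Factorial F) (hU : IsMaximalSuffixCodeIn {s | s ++ w ∈ F} U)
    (hu₀ : a :: m ∈ U) (hmaxlen : ∀ u ∈ U, u.length ≤ m.length + 1) (hmne : m ≠ []) :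
    IsMaximalSuffixCodeIn {s | s ++ w ∈ F}
      ((U \ {x | ∃ c : A, x = c :: m}) ∪ {m}) := by
  have hmU : m ∉ U := m_not_mem hU hu₀
  have hKL1 := ext_letter_mem hU hu₀ hmaxlen
  have hmS : m ++ w ∈ F := fac_mem hFac (hU.2.1 hu₀) [a] (m ++ w) [] (by simp)
  refine ⟨⟨?_, ?_⟩, ?_, ?_⟩
  · rintro u hu
    rcases hu with ⟨huU, -⟩ | hum
    · exact hU.1.1 u huU
    · rw [Set.mem_singleton_iff] at hum; subst u; exact hmne
  · rintro u hu v hv hsuf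
    rcases hu with ⟨huU, huB⟩ | hum
    swap
    · rw [Set.mem_singleton_iff] at hum; subst u
      rcases hv with ⟨hvU, hvB⟩ | hvm
      swap
      · rw [Set.mem_singleton_iff] at hvm; subst v; rfl
      · -- u = m, v ∈ U \ B
        exfalso
        obtain ⟨t, ht⟩ := hsuf
        have htne : t ≠ [] := by
          rintro rfl
          simp only [List.nil_append] at ht
          exact hmU (ht ▸ hvU)
        rcases List.eq_nil_or_concat t with rfl | ⟨ys, c, rfl⟩
        · exact htne rfl
        · rw [List.concat_eq_append] at ht
          have hcm : c :: m ∈ U := hKL1 c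
            (fac_mem hFac (hU.2.1 hvU) ys ((c :: m) ++ w) []
              (by rw [← ht]; simp))
          have : c :: m = v := hU.1.2 _ hcm v hvU ⟨ys, by rw [← ht]; simp⟩
          exact hvB ⟨c, this.symm⟩
    rcases hv with ⟨hvU, hvB⟩ | hvm
    · exact hU.1.2 u huU v hvU hsuf
    · -- u ∈ U \ B, v = m
      rw [Set.mem_singleton_iff] at hvm; subst v
      exfalso
      have : u = a :: m := hU.1.2 u huU (a :: m) hu₀ (hsuf.trans (List.suffix_cons a m))
      exact huB ⟨a, this⟩
  · rintro u hu
    rcases hu with ⟨huU, -⟩ | hum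
    · exact hU.2.1 huU
    · rw [Set.mem_singleton_iff] at hum; subst u; exact hmS
  · intro W hWcode hWS hsub
    refine le_antisymm hsub ?_
    intro x hx
    have hmW : m ∈ W := hsub (Or.inr rfl)
    by_cases hxm : x = m
    · exact Or.inr hxm
    by_cases h1 : ∃ u' ∈ U, u' <:+ x ∧ u' ≠ x
    · exfalso
      obtain ⟨u', hu', hs, hne⟩ := h1
      by_cases hu'B : ∃ c : A, u' = c :: m
      · obtain ⟨c, rfl⟩ := hu'B
        exact hxm (hWcode.2 m hmW x hx ((List.suffix_cons c m).trans hs)).symm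
      · exact hne (hWcode.2 u' (hsub (Or.inl ⟨hu', hu'B⟩)) x hx hs)
    by_cases h2 : ∃ u' ∈ U, x <:+ u' ∧ x ≠ u'
    · exfalso
      obtain ⟨u', hu', hs, hne⟩ := h2
      by_cases hu'B : ∃ c : A, u' = c :: m
      · obtain ⟨c, rfl⟩ := hu'B
        rcases List.suffix_cons_iff.1 hs with h3 | h3
        · subst x
          exact hxm (hWcode.2 m hmW _ hx (List.suffix_cons c m)).symm
        · exact hxm (hWcode.2 x hx m hmW h3)
      · exact hne (hWcode.2 x hx u' (hsub (Or.inl ⟨hu', hu'B⟩)) hs)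
    · push_neg at h1 h2
      have hxU : x ∈ U := by
        have hcode : IsSuffixCode (insert x U) := by
          constructor
          · intro u hu
            rcases Set.mem_insert_iff.1 hu with hux | hu'
            · subst u; exact hWcode.1 x hx
            · exact hU.1.1 u hu'
          · intro u hu v hv hsuf
            rcases Set.mem_insert_iff.1 hu with hux | hu'
            · subst u
              rcases Set.mem_insert_iff.1 hv with hvx | hv'
              · subst v; rfl
              · by_contra hne
                exact hne (h2 v hv' hsuf)
            · rcases Set.mem_insert_iff.1 hv with hvx | hv'
              · subst v
                by_contra hne
                exact hne (h1 u hu' hsuf)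
              · exact hU.1.2 u hu' v hv' hsuf
        have := hU.2.2 _ hcode
          (by
            intro u hu
            rcases Set.mem_insert_iff.1 hu with rfl | hu'
            · exact hWS hx
            · exact hU.2.1 hu')
          (Set.subset_insert _ _)
        exact this ▸ Set.mem_insert _ _
      refine Or.inl ⟨hxU, ?_⟩
      rintro ⟨c, rfl⟩
      exact hxm (hWcode.2 m hmW _ hx (List.suffix_cons c m)).symm

end Surgery
section Reversal

variable {F U V S : Set (List A)} {w : List A}

/-- The set of reversals. -/
def revSet (S : Set (List A)) : Set (List A) := {x | x.reverse ∈ S}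

lemma mem_revSet {x : List A} : x ∈ revSet S ↔ x.reverse ∈ S := Iff.rfl

lemma revSet_revSet : revSet (revSet S) = S := by
  ext x; simp [revSet]

lemma revSet_finite (h : S.Finite) : (revSet S).Finite := by
  have : revSet S = List.reverse '' S := by
    ext x
    constructor
    · intro hx; exact ⟨x.reverse, hx, by simp⟩
    · rintro ⟨y, hy, rfl⟩; simpa [revSet]
  rw [this]; exact h.image _

lemma rev_factorial (h : Factorial F) : Factorial (revSet F) :=
  fun _ _ hu hv => h hu (List.reverse_infix.2 hv)

lemma rev_biessential (h : Biessential F) : Biessential (revSet F) := by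
  refine ⟨rev_factorial h.1, fun w hw => ?_⟩
  obtain ⟨a, b, hab⟩ := h.2 w.reverse hw
  refine ⟨b, a, ?_⟩
  show (b :: (w ++ [a])).reverse ∈ F
  have : (b :: (w ++ [a])).reverse = a :: (w.reverse ++ [b]) := by simp
  rw [this]; exact hab

lemma rev_isTreeSet (h : IsTreeSet F) : IsTreeSet (revSet F) := by
  refine ⟨rev_biessential h.1, fun w hw => ?_⟩
  have h2 := h.2 w.reverse hw
  refine isTree_of_iso (G := extensionGraph F w.reverse) ?_ h2
  refine bipIsoSwap
    (Equiv.subtypeEquiv (Equiv.refl A) (fun a => ?_))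
    (Equiv.subtypeEquiv (Equiv.refl A) (fun b => ?_)) (fun a b => ?_)
  · show a :: w.reverse ∈ F ↔ w ++ [a] ∈ revSet F
    have : (w ++ [a]).reverse = a :: w.reverse := by simp
    rw [mem_revSet, this]
  · show w.reverse ++ [b] ∈ F ↔ b :: w ∈ revSet F
    have : (b :: w).reverse = w.reverse ++ [b] := by simp
    rw [mem_revSet, this]
  · show a.1 :: (w.reverse ++ [b.1]) ∈ F ↔ b.1 :: (w ++ [a.1]) ∈ revSet F
    have : (b.1 :: (w ++ [a.1])).reverse = a.1 :: (w.reverse ++ [b.1]) := by simp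
    rw [mem_revSet, this]

lemma rev_prefix_code (h : IsPrefixCode V) : IsSuffixCode (revSet V) := by
  constructor
  · intro u hu hne
    exact h.1 u.reverse hu (by simp [hne])
  · intro u hu v hv hsuf
    have := h.2 u.reverse hu v.reverse hv (List.reverse_prefix.2 hsuf)
    exact List.reverse_injective this

lemma rev_suffix_code (h : IsSuffixCode U) : IsPrefixCode (revSet U) := by
  constructor
  · intro u hu hne
    exact h.1 u.reverse hu (by simp [hne])
  · intro u hu v hv hpre
    have := h.2 u.reverse hu v.reverse hv (List.reverse_suffix.2 hpre)
    exact List.reverse_injective this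

lemma rev_max_prefix (hV : IsMaximalPrefixCodeIn {p | w ++ p ∈ F} V) :
    IsMaximalSuffixCodeIn {s | s ++ w.reverse ∈ revSet F} (revSet V) := by
  refine ⟨rev_prefix_code hV.1, ?_, ?_⟩
  · intro u hu
    show (u ++ w.reverse).reverse ∈ F
    have : (u ++ w.reverse).reverse = w ++ u.reverse := by simp
    rw [this]
    exact hV.2.1 hu
  · intro W hW hWS hsub
    have hVW : V = revSet W := by
      refine hV.2.2 (revSet W) (rev_suffix_code hW) ?_ ?_
      · intro x hx
        have := hWS hx
        show w ++ x ∈ F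
        have he : (x.reverse ++ w.reverse).reverse = w ++ x := by simp
        rw [← he]
        exact this
      · intro v hv
        exact hsub (show v.reverse.reverse ∈ V by simpa)
    rw [hVW, revSet_revSet]

lemma rev_max_suffix (hU : IsMaximalSuffixCodeIn {s | s ++ w ∈ F} U) :
    IsMaximalPrefixCodeIn {p | w.reverse ++ p ∈ revSet F} (revSet U) := by
  refine ⟨rev_suffix_code hU.1, ?_, ?_⟩
  · intro u hu
    show (w.reverse ++ u).reverse ∈ F
    have : (w.reverse ++ u).reverse = u.reverse ++ w := by simp
    rw [this]
    exact hU.2.1 hu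
  · intro W hW hWS hsub
    have hUW : U = revSet W := by
      refine hU.2.2 (revSet W) (rev_prefix_code hW) ?_ ?_
      · intro x hx
        have := hWS hx
        show x ++ w ∈ F
        have he : (w.reverse ++ x.reverse).reverse = x ++ w := by simp
        rw [← he]
        exact this
      · intro u hu
        exact hsub (show u.reverse.reverse ∈ U by simpa)
    rw [hUW, revSet_revSet]

/-- Reversal isomorphism for generalized extension graphs. -/
noncomputable def genExtRevIso (F U V : Set (List A)) (w : List A) :
    genExtGraph (revSet F) (revSet V) (revSet U) w.reverse ≃g genExtGraph F U V w := by
  refine bipIsoSwap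
    (E := fun (l : {l : List A // l ∈ revSet V ∧ l ++ w.reverse ∈ revSet F})
        (r : {r : List A // r ∈ revSet U ∧ w.reverse ++ r ∈ revSet F}) =>
      l.1 ++ w.reverse ++ r.1 ∈ revSet F)
    (E' := fun (l : {l : List A // l ∈ U ∧ l ++ w ∈ F})
        (r : {r : List A // r ∈ V ∧ w ++ r ∈ F}) => l.1 ++ w ++ r.1 ∈ F) ?_ ?_ ?_
  · -- left part of source ≃ right part of target
    refine ⟨fun l => ⟨l.1.reverse, l.2.1, ?_⟩, fun r => ⟨r.1.reverse, by show r.1.reverse.reverse ∈ V; simpa using r.2.1, ?_⟩,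
      fun l => Subtype.ext (by simp), fun r => Subtype.ext (by simp)⟩
    · have : (l.1 ++ w.reverse).reverse = w ++ l.1.reverse := by simp
      rw [← this]
      exact l.2.2
    · show r.1.reverse ++ w.reverse ∈ revSet F
      have : (r.1.reverse ++ w.reverse).reverse = w ++ r.1 := by simp
      rw [mem_revSet, this]
      exact r.2.2
  · refine ⟨fun r => ⟨r.1.reverse, by exact r.2.1, ?_⟩,
      fun l => ⟨l.1.reverse, ?_, ?_⟩,
      fun r => Subtype.ext (by simp), fun l => Subtype.ext (by simp)⟩
    · have : (w.reverse ++ r.1).reverse = r.1.reverse ++ w := by simp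
      rw [← this]
      exact r.2.2
    · show l.1.reverse.reverse ∈ U
      simpa using l.2.1
    · show w.reverse ++ l.1.reverse ∈ revSet F
      have : (w.reverse ++ l.1.reverse).reverse = l.1 ++ w := by simp
      rw [mem_revSet, this]
      exact l.2.2
  · intro l r
    show (l.1 ++ w.reverse ++ r.1 ∈ revSet F) ↔ _
    have : (l.1 ++ w.reverse ++ r.1).reverse = (r.1.reverse ++ w) ++ l.1.reverse := by simp
    rw [mem_revSet, this]
    exact Iff.rfl

end Reversal
section Counting

variable {F U V : Set (List A)} {w : List A}

/-- The set of edges of a generalized extension graph, as pairs of words. -/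
def pairSet (F U V : Set (List A)) (w : List A) : Set (List A × List A) :=
  {p | p.1 ∈ U ∧ p.2 ∈ V ∧ p.1 ++ w ++ p.2 ∈ F}

lemma genExt_edge_card (hU : U ⊆ {s | s ++ w ∈ F}) (hV : V ⊆ {p | w ++ p ∈ F}) :
    Nat.card (genExtGraph F U V w).edgeSet = (pairSet F U V w).ncard := by
  rw [← Nat.card_coe_set_eq]
  refine (bipGraph_edge_card (E := fun (l : {l : List A // l ∈ U ∧ l ++ w ∈ F})
    (r : {r : List A // r ∈ V ∧ w ++ r ∈ F}) => l.1 ++ w ++ r.1 ∈ F)).trans ?_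
  refine Nat.card_eq_of_bijective (fun q => ⟨(q.1.1.1, q.1.2.1), q.1.1.2.1, q.1.2.2.1, q.2⟩)
    ⟨?_, ?_⟩
  · rintro ⟨⟨⟨l, hl⟩, ⟨r, hr⟩⟩, he⟩ ⟨⟨⟨l', hl'⟩, ⟨r', hr'⟩⟩, he'⟩ h
    simp only [Subtype.mk.injEq, Subtype.ext_iff, Prod.mk.injEq] at h ⊢
    exact ⟨h.1, h.2⟩
  · rintro ⟨⟨l, r⟩, hl, hr, he⟩
    exact ⟨⟨⟨⟨l, hl, hU hl⟩, ⟨r, hr, hV hr⟩⟩, he⟩, rfl⟩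

lemma genExt_vertex_card (hUfin : U.Finite) (hVfin : V.Finite)
    (hU : U ⊆ {s | s ++ w ∈ F}) (hV : V ⊆ {p | w ++ p ∈ F}) :
    Nat.card ({l : List A // l ∈ U ∧ l ++ w ∈ F} ⊕ {r : List A // r ∈ V ∧ w ++ r ∈ F})
      = U.ncard + V.ncard := by
  have hUset : {l : List A | l ∈ U ∧ l ++ w ∈ F} = U :=
    Set.ext fun l => ⟨fun h => h.1, fun h => ⟨h, hU h⟩⟩
  have hVset : {r : List A | r ∈ V ∧ w ++ r ∈ F} = V :=
    Set.ext fun r => ⟨fun h => h.1, fun h => ⟨h, hV h⟩⟩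
  haveI : Finite {l : List A // l ∈ U ∧ l ++ w ∈ F} :=
    (hUfin.subset (fun l (h : l ∈ U ∧ l ++ w ∈ F) => h.1)).to_subtype
  haveI : Finite {r : List A // r ∈ V ∧ w ++ r ∈ F} :=
    (hVfin.subset (fun r (h : r ∈ V ∧ w ++ r ∈ F) => h.1)).to_subtype
  rw [Nat.card_sum]
  congr 1
  · rw [← Nat.card_coe_set_eq]
    exact Nat.card_congr (Equiv.setCongr hUset)
  · rw [← Nat.card_coe_set_eq]
    exact Nat.card_congr (Equiv.setCongr hVset)

end Counting

section BaseCase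

variable {F U V : Set (List A)} {w : List A}

lemma base_case (hF : IsTreeSet F) (hw : w ∈ F)
    (hU : IsMaximalSuffixCodeIn {s | s ++ w ∈ F} U)
    (hV : IsMaximalPrefixCodeIn {p | w ++ p ∈ F} V)
    (hulen : ∀ u ∈ U, u.length = 1) (hvlen : ∀ v ∈ V, v.length = 1) :
    (genExtGraph F U V w).IsTree := by
  have hFac : Factorial F := hF.1.1
  have hUeq := suffix_code_singletons hFac hU hulen
  have hVeq := prefix_code_singletons hFac hV hvlen
  subst hUeq hVeq
  refine isTree_of_iso ?_ (hF.2 w hw)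
  refine bipIso
    (Equiv.ofBijective (fun a => ⟨[a.1], ⟨a.1, rfl, a.2⟩, a.2⟩) ⟨?_, ?_⟩)
    (Equiv.ofBijective (fun b => ⟨[b.1], ⟨b.1, rfl, b.2⟩, b.2⟩) ⟨?_, ?_⟩) (fun a b => ?_)
  · intro x y h
    apply Subtype.ext
    simpa using congrArg Subtype.val h
  · rintro ⟨l, ⟨aa, rfl, hmem⟩, h2⟩
    exact ⟨⟨aa, hmem⟩, rfl⟩
  · intro x y h
    apply Subtype.ext
    simpa using congrArg Subtype.val h
  · rintro ⟨l, ⟨bb, rfl, hmem⟩, h2⟩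
    exact ⟨⟨bb, hmem⟩, rfl⟩
  · show a.1 :: (w ++ [b.1]) ∈ F ↔ [a.1] ++ w ++ [b.1] ∈ F
    simp

end BaseCase
/-- The main induction statement. -/
def TreeStmt (A : Type*) (n : ℕ) : Prop :=
  ∀ F : Set (List A), IsTreeSet F → ∀ w ∈ F, ∀ U V : Set (List A),
    ∀ (hUfin : U.Finite) (hVfin : V.Finite),
      IsMaximalSuffixCodeIn {s | s ++ w ∈ F} U →
      IsMaximalPrefixCodeIn {p | w ++ p ∈ F} V →
      (∑ u ∈ hUfin.toFinset, (u.length - 1)) + (∑ v ∈ hVfin.toFinset, (v.length - 1)) ≤ n →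
      (genExtGraph F U V w).IsTree

lemma step_U {n : ℕ} (IH : TreeStmt A n)
    (F : Set (List A)) (hF : IsTreeSet F) (w : List A) (hw : w ∈ F)
    (U V : Set (List A)) (hUfin : U.Finite) (hVfin : V.Finite)
    (hU : IsMaximalSuffixCodeIn {s | s ++ w ∈ F} U)
    (hV : IsMaximalPrefixCodeIn {p | w ++ p ∈ F} V)
    (hlong : ∃ u ∈ U, 2 ≤ u.length)
    (hmeas : (∑ u ∈ hUfin.toFinset, (u.length - 1)) +
      (∑ v ∈ hVfin.toFinset, (v.length - 1)) ≤ n + 1) :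
    (genExtGraph F U V w).IsTree := by
  classical
  have hBE : Biessential F := hF.1
  have hFac : Factorial F := hBE.1
  -- pick a longest element `u₀ = a :: m` of `U`
  obtain ⟨u₁, hu₁U, hu₁len⟩ := hlong
  obtain ⟨u₀, hu₀F, hu₀max⟩ := Finset.exists_max_image hUfin.toFinset List.length
    ⟨u₁, hUfin.mem_toFinset.2 hu₁U⟩
  have hu₀U : u₀ ∈ U := hUfin.mem_toFinset.1 hu₀F
  have h2 : 2 ≤ u₀.length := le_trans hu₁len (hu₀max u₁ (hUfin.mem_toFinset.2 hu₁U))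
  obtain ⟨a, m, rfl⟩ : ∃ a m, u₀ = a :: m := by
    rcases u₀ with _ | ⟨a, m⟩
    · simp at h2
    · exact ⟨a, m, rfl⟩
  have hmne : m ≠ [] := by
    rintro rfl
    simp at h2
  have hmaxlen : ∀ u ∈ U, u.length ≤ m.length + 1 := fun u hu => by
    simpa using hu₀max u (hUfin.mem_toFinset.2 hu)
  have hKL1 := ext_letter_mem hU hu₀U hmaxlen
  have hmU : m ∉ U := m_not_mem hU hu₀U
  have hmw : m ++ w ∈ F := fac_mem hFac (hU.2.1 hu₀U) [a] (m ++ w) [] (by simp)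
  set B : Set (List A) := {x | ∃ c : A, x = c :: m} with hBdef
  set U' : Set (List A) := (U \ B) ∪ {m} with hU'def
  have hU' : IsMaximalSuffixCodeIn {s | s ++ w ∈ F} U' := U'_max hFac hU hu₀U hmaxlen hmne
  have hU'fin : U'.Finite := (hUfin.subset Set.diff_subset).union (Set.finite_singleton m)
  set Vm : Set (List A) := {v | v ∈ V ∧ (m ++ w) ++ v ∈ F} with hVmdef
  have hVmfin : Vm.Finite := hVfin.subset fun v hv => hv.1
  have hVm : IsMaximalPrefixCodeIn {p | (m ++ w) ++ p ∈ F} Vm := pc_restrict hBE hVfin hV hmw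
  set LC : Set (List A) := sufLetters F (m ++ w) with hLCdef
  have hLCmax : IsMaximalSuffixCodeIn {s | s ++ (m ++ w) ∈ F} LC := sufLetters_max hFac _
  have hLCB : ∀ l ∈ LC, l ++ m ∈ U := by
    rintro l ⟨c, rfl, hc⟩
    exact hKL1 c (by simpa using hc)
  have hLCinj : Set.InjOn (fun l => l ++ m) LC := fun l₁ _ l₂ _ h => List.append_cancel_right h
  have hLCfin : LC.Finite := by
    refine Set.Finite.of_finite_image (hUfin.subset ?_) hLCinj
    rintro x ⟨l, hl, rfl⟩
    exact hLCB l hl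
  have haLC : [a] ∈ LC := ⟨a, rfl, by simpa using hU.2.1 hu₀U⟩
  -- measure bookkeeping
  set UF := hUfin.toFinset with hUFdef
  set BF := UF.filter (fun x => x ∈ B) with hBFdef
  set DF := UF.filter (fun x => x ∉ B) with hDFdef
  have hsum1 : ∑ x ∈ UF, (x.length - 1) =
      ∑ x ∈ BF, (x.length - 1) + ∑ x ∈ DF, (x.length - 1) :=
    (Finset.sum_filter_add_sum_filter_not UF _ _).symm
  have hmDF : m ∉ DF := by
    simp only [hDFdef, Finset.mem_filter]
    rintro ⟨h1, -⟩
    exact hmU (hUfin.mem_toFinset.1 h1)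
  have hU'toF : hU'fin.toFinset = insert m DF := by
    ext x
    simp only [Set.Finite.mem_toFinset, hU'def, Finset.mem_insert, hDFdef, Finset.mem_filter,
      Set.mem_union, Set.mem_diff, Set.mem_singleton_iff, Set.Finite.mem_toFinset, hUFdef]
    tauto
  have hsum2 : ∑ x ∈ hU'fin.toFinset, (x.length - 1) =
      (m.length - 1) + ∑ x ∈ DF, (x.length - 1) := by
    rw [hU'toF, Finset.sum_insert hmDF]
  have hBFam : (a :: m) ∈ BF := by
    simp only [hBFdef, Finset.mem_filter]
    exact ⟨hUfin.mem_toFinset.2 hu₀U, ⟨a, rfl⟩⟩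
  have hsum3 : m.length ≤ ∑ x ∈ BF, (x.length - 1) := by
    have := Finset.single_le_sum (f := fun x => x.length - 1)
      (fun i _ => Nat.zero_le _) hBFam
    simpa using this
  have hmpos : 1 ≤ m.length := by
    rcases m with _ | _
    · exact absurd rfl hmne
    · simp
  have hVmsub : hVmfin.toFinset ⊆ hVfin.toFinset := by
    intro x hx
    rw [Set.Finite.mem_toFinset] at hx ⊢
    exact hx.1
  have hsumVm : ∑ v ∈ hVmfin.toFinset, (v.length - 1) ≤ ∑ v ∈ hVfin.toFinset, (v.length - 1) :=
    Finset.sum_le_sum_of_subset hVmsub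
  have hsumLC : ∑ l ∈ hLCfin.toFinset, (l.length - 1) = 0 := by
    refine Finset.sum_eq_zero ?_
    intro l hl
    rw [Set.Finite.mem_toFinset] at hl
    obtain ⟨c, rfl, -⟩ := hl
    rfl
  -- the two smaller trees, by the induction hypothesis
  have hG' : (genExtGraph F U' V w).IsTree := by
    refine IH F hF w hw U' V hU'fin hVfin hU' hV ?_
    omega
  have hT : (genExtGraph F LC Vm (m ++ w)).IsTree := by
    refine IH F hF (m ++ w) hmw LC Vm hLCfin hVmfin hLCmax hVm ?_
    omega
  -- connectivity of the big graph
  have hφTpfl : ∀ c : {l : List A // l ∈ LC ∧ l ++ (m ++ w) ∈ F},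
      c.1 ++ m ∈ U ∧ (c.1 ++ m) ++ w ∈ F := by
    intro c
    have h1 := hLCB c.1 c.2.1
    exact ⟨h1, hU.2.1 h1⟩
  have hφTpfr : ∀ r : {r : List A // r ∈ Vm ∧ (m ++ w) ++ r ∈ F},
      r.1 ∈ V ∧ w ++ r.1 ∈ F := by
    intro r
    exact ⟨r.2.1.1, fac_mem hFac r.2.2 m (w ++ r.1) [] (by simp)⟩
  set φT : ({l : List A // l ∈ LC ∧ l ++ (m ++ w) ∈ F} ⊕
      {r : List A // r ∈ Vm ∧ (m ++ w) ++ r ∈ F}) →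
      ({l : List A // l ∈ U ∧ l ++ w ∈ F} ⊕ {r : List A // r ∈ V ∧ w ++ r ∈ F}) :=
    Sum.elim (fun c => Sum.inl ⟨c.1 ++ m, hφTpfl c⟩) (fun r => Sum.inr ⟨r.1, hφTpfr r⟩)
    with hφTdef
  have hφTadj : ∀ x y, (genExtGraph F LC Vm (m ++ w)).Adj x y →
      (genExtGraph F U V w).Adj (φT x) (φT y) := by
    intro x y h
    rcases bipGraph_adj_cases h with ⟨c, r, he, rfl, rfl⟩ | ⟨c, r, he, rfl, rfl⟩
    · simp only [hφTdef, Sum.elim_inl, Sum.elim_inr]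
      exact bipGraph_adj_inl_inr.2 (by simpa [List.append_assoc] using he)
    · simp only [hφTdef, Sum.elim_inl, Sum.elim_inr]
      exact bipGraph_adj_inr_inl.2 (by simpa [List.append_assoc] using he)
  have hTreach : ∀ x y, (genExtGraph F U V w).Reachable (φT x) (φT y) :=
    fun x y => reachable_of_adj_reachable φT (fun a b h => (hφTadj a b h).reachable)
      (hT.isConnected x y)
  have hψpf : ∀ l : {l : List A // l ∈ U' ∧ l ++ w ∈ F}, l.1 ≠ m → l.1 ∈ U := by
    intro l hlm
    rcases l.2.1 with ⟨h1, -⟩ | h1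
    · exact h1
    · exact absurd (Set.mem_singleton_iff.1 h1) hlm
  set ψ : ({l : List A // l ∈ U' ∧ l ++ w ∈ F} ⊕ {r : List A // r ∈ V ∧ w ++ r ∈ F}) →
      ({l : List A // l ∈ U ∧ l ++ w ∈ F} ⊕ {r : List A // r ∈ V ∧ w ++ r ∈ F}) :=
    Sum.elim (fun l => if h : l.1 = m then Sum.inl ⟨a :: m, hu₀U, hU.2.1 hu₀U⟩
        else Sum.inl ⟨l.1, hψpf l h, l.2.2⟩)
      (fun r => Sum.inr r) with hψdef
  have haS : [a] ++ (m ++ w) ∈ F := by simpa using hU.2.1 hu₀U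
  have hψadj : ∀ x y, (genExtGraph F U' V w).Adj x y →
      (genExtGraph F U V w).Reachable (ψ x) (ψ y) := by
    have key : ∀ (l : {l : List A // l ∈ U' ∧ l ++ w ∈ F})
        (r : {r : List A // r ∈ V ∧ w ++ r ∈ F}), l.1 ++ w ++ r.1 ∈ F →
        (genExtGraph F U V w).Reachable (ψ (Sum.inl l)) (ψ (Sum.inr r)) := by
      intro l r he
      by_cases hlm : l.1 = m
      · have he' : (m ++ w) ++ r.1 ∈ F := by rw [← hlm]; exact he
        have hrVm : r.1 ∈ Vm := ⟨r.2.1, he'⟩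
        have hre := hTreach (Sum.inl ⟨[a], haLC, haS⟩) (Sum.inr ⟨r.1, hrVm, he'⟩)
        have e1 : φT (Sum.inl ⟨[a], haLC, haS⟩) = ψ (Sum.inl l) := by
          simp only [hφTdef, hψdef, Sum.elim_inl, dif_pos hlm]
          exact congrArg Sum.inl (Subtype.ext (by simp))
        have e2 : φT (Sum.inr ⟨r.1, hrVm, he'⟩) = ψ (Sum.inr r) := by
          simp only [hφTdef, hψdef, Sum.elim_inr]
        rwa [e1, e2] at hre
      · have hadj : (genExtGraph F U V w).Adj (Sum.inl ⟨l.1, hψpf l hlm, l.2.2⟩) (Sum.inr r) :=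
          bipGraph_adj_inl_inr.2 he
        have e1 : ψ (Sum.inl l) = Sum.inl ⟨l.1, hψpf l hlm, l.2.2⟩ := by
          simp only [hψdef, Sum.elim_inl, dif_neg hlm]
        rw [e1]
        exact hadj.reachable
    intro x y h
    rcases bipGraph_adj_cases h with ⟨c, r, he, rfl, rfl⟩ | ⟨c, r, he, rfl, rfl⟩
    · exact key c r he
    · exact (key c r he).symm
  have hψreach : ∀ x y, (genExtGraph F U' V w).Reachable x y →
      (genExtGraph F U V w).Reachable (ψ x) (ψ y) :=
    fun x y h => reachable_of_adj_reachable ψ hψadj h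
  obtain ⟨v₀, hv₀V, hv₀⟩ := pc_ext hBE hVfin hV hmw ⟨m, rfl⟩
  have hwv₀ : w ++ v₀ ∈ F := fac_mem hFac hv₀ m (w ++ v₀) [] (by simp)
  have hv₀Vm : v₀ ∈ Vm := ⟨hv₀V, hv₀⟩
  have hall : ∀ z, (genExtGraph F U V w).Reachable z (Sum.inr ⟨v₀, hv₀V, hwv₀⟩) := by
    rintro (l | r)
    · by_cases hBl : ∃ c : A, l.1 = c :: m
      · obtain ⟨c, hc⟩ := hBl
        have hcS : [c] ++ (m ++ w) ∈ F := by
          have h3 := l.2.2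
          rw [hc] at h3
          simpa using h3
        have hcLC : [c] ∈ LC := ⟨c, rfl, hcS⟩
        have hre := hTreach (Sum.inl ⟨[c], hcLC, hcS⟩) (Sum.inr ⟨v₀, hv₀Vm, hv₀⟩)
        have e1 : φT (Sum.inl ⟨[c], hcLC, hcS⟩) = Sum.inl l := by
          simp only [hφTdef, Sum.elim_inl]
          exact congrArg Sum.inl (Subtype.ext (by simp [hc]))
        have e2 : φT (Sum.inr ⟨v₀, hv₀Vm, hv₀⟩) = Sum.inr ⟨v₀, hv₀V, hwv₀⟩ := by
          simp only [hφTdef, Sum.elim_inr]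
        rwa [e1, e2] at hre
      · have hlU' : l.1 ∈ U' := Or.inl ⟨l.2.1, hBl⟩
        have hre := hψreach (Sum.inl ⟨l.1, hlU', l.2.2⟩) (Sum.inr ⟨v₀, hv₀V, hwv₀⟩)
          (hG'.isConnected _ _)
        have hlm : l.1 ≠ m := fun h => hmU (h ▸ l.2.1)
        have e1 : ψ (Sum.inl ⟨l.1, hlU', l.2.2⟩) = Sum.inl l := by
          simp only [hψdef, Sum.elim_inl, dif_neg hlm]
        have e2 : ψ (Sum.inr ⟨v₀, hv₀V, hwv₀⟩) = Sum.inr ⟨v₀, hv₀V, hwv₀⟩ := rfl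
        rwa [e1, e2] at hre
    · have hre := hψreach (Sum.inr r) (Sum.inr ⟨v₀, hv₀V, hwv₀⟩) (hG'.isConnected _ _)
      exact hre
  have hconn : (genExtGraph F U V w).Connected := by
    haveI : Nonempty ({l : List A // l ∈ U ∧ l ++ w ∈ F} ⊕
        {r : List A // r ∈ V ∧ w ++ r ∈ F}) := ⟨Sum.inr ⟨v₀, hv₀V, hwv₀⟩⟩
    exact ⟨fun x y => (hall x).trans (hall y).symm⟩
  -- counting
  have instL : ∀ (U₀ : Set (List A)), U₀.Finite → ∀ w₀ : List A,
      Finite {l : List A // l ∈ U₀ ∧ l ++ w₀ ∈ F} := fun U₀ hf w₀ =>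
    (hf.subset (fun l (h : l ∈ U₀ ∧ l ++ w₀ ∈ F) => h.1)).to_subtype
  have instR : ∀ (V₀ : Set (List A)), V₀.Finite → ∀ w₀ : List A,
      Finite {r : List A // r ∈ V₀ ∧ w₀ ++ r ∈ F} := fun V₀ hf w₀ =>
    (hf.subset (fun r (h : r ∈ V₀ ∧ w₀ ++ r ∈ F) => h.1)).to_subtype
  haveI := instL U hUfin w
  haveI := instL U' hU'fin w
  haveI := instL LC hLCfin (m ++ w)
  haveI := instR V hVfin w
  haveI := instR Vm hVmfin (m ++ w)
  set Pg := pairSet F U V w with hPgdef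
  set Pg' := pairSet F U' V w with hPg'def
  set Pt := pairSet F LC Vm (m ++ w) with hPtdef
  set A1 : Set (List A × List A) := {p | p ∈ Pg ∧ p.1 ∉ B} with hA1def
  set A2 : Set (List A × List A) := {p | p ∈ Pg ∧ p.1 ∈ B} with hA2def
  set M : Set (List A × List A) := {p | p.1 = m ∧ p.2 ∈ Vm} with hMdef
  have hPgfin : Pg.Finite := (hUfin.prod hVfin).subset
    (fun p (hp : p ∈ Pg) => Set.mem_prod.2 ⟨hp.1, hp.2.1⟩)
  have hA1fin : A1.Finite := hPgfin.subset fun p hp => hp.1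
  have hA2fin : A2.Finite := hPgfin.subset fun p hp => hp.1
  have hMfin : M.Finite := ((Set.finite_singleton m).prod hVmfin).subset
    (fun p (hp : p ∈ M) => Set.mem_prod.2 ⟨hp.1, hp.2⟩)
  have hPtfin : Pt.Finite := (hLCfin.prod hVmfin).subset
    (fun p (hp : p ∈ Pt) => Set.mem_prod.2 ⟨hp.1, hp.2.1⟩)
  have he1 : Pg.ncard = A1.ncard + A2.ncard := by
    have hsplit : A1 ∪ A2 = Pg := by
      ext p
      by_cases hb : p.1 ∈ B <;> simp [hA1def, hA2def, hb]
    have hdis : Disjoint A1 A2 :=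
      Set.disjoint_left.2 (fun p (hp : p ∈ A1) (hp2 : p ∈ A2) => hp.2 hp2.2)
    rw [← hsplit, Set.ncard_union_eq hdis hA1fin hA2fin]
  have he2 : Pg'.ncard = A1.ncard + M.ncard := by
    have hsplit : A1 ∪ M = Pg' := by
      ext p
      constructor
      · rintro (⟨⟨h1, h2, h3⟩, hb⟩ | ⟨h1, h2⟩)
        · exact ⟨Or.inl ⟨h1, hb⟩, h2, h3⟩
        · refine ⟨Or.inr (Set.mem_singleton_iff.2 h1), h2.1, ?_⟩
          rw [h1]
          exact h2.2
      · rintro ⟨h1, h2, h3⟩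
        rcases h1 with ⟨h1U, h1B⟩ | h1m
        · exact Or.inl ⟨⟨h1U, h2, h3⟩, h1B⟩
        · have hm1 := Set.mem_singleton_iff.1 h1m
          refine Or.inr ⟨hm1, h2, ?_⟩
          rw [← hm1]
          exact h3
    have hdis : Disjoint A1 M :=
      Set.disjoint_left.2 (fun p (hp : p ∈ A1) (hp2 : p ∈ M) => hmU (hp2.1 ▸ hp.1.1))
    rw [← hsplit, Set.ncard_union_eq hdis hA1fin hMfin]
  have he3 : M.ncard = Vm.ncard := by
    have himg : M = (fun r => (m, r)) '' Vm := by
      ext p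
      constructor
      · rintro ⟨h1, h2⟩
        exact ⟨p.2, h2, Prod.ext h1.symm rfl⟩
      · rintro ⟨r, hr, rfl⟩
        exact ⟨rfl, hr⟩
    rw [himg]
    exact Set.ncard_image_of_injective Vm (fun r s h => congrArg Prod.snd h)
  have he4 : A2.ncard = Pt.ncard := by
    have himg : A2 = (fun q : List A × List A => (q.1 ++ m, q.2)) '' Pt := by
      ext p
      constructor
      · rintro ⟨⟨h1, h2, h3⟩, c, hc⟩
        have h1w : p.1 ++ w ∈ F := hU.2.1 h1
        refine ⟨([c], p.2), ⟨⟨c, rfl, by rw [hc] at h1w; simpa using h1w⟩,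
          ⟨h2, ?_⟩, ?_⟩, ?_⟩
        · rw [hc] at h3
          exact fac_mem hFac h3 [c] ((m ++ w) ++ p.2) [] (by simp)
        · rw [hc] at h3
          simpa [List.append_assoc] using h3
        · exact Prod.ext (by rw [hc]; rfl) rfl
      · rintro ⟨⟨q1, q2⟩, ⟨⟨c, rfl, hcF⟩, hq2, hq3⟩, rfl⟩
        refine ⟨⟨hLCB [c] ⟨c, rfl, hcF⟩, hq2.1, ?_⟩, ⟨c, rfl⟩⟩
        simpa [List.append_assoc] using hq3
    rw [himg]
    refine Set.ncard_image_of_injOn ?_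
    intro q1 _ q2 _ h
    simp only [Prod.mk.injEq] at h
    exact Prod.ext (List.append_cancel_right h.1) h.2
  have hc1 : Pg'.ncard + 1 = U'.ncard + V.ncard := by
    have := tree_nat_card_edge hG'
    rwa [genExt_edge_card hU'.2.1 hV.2.1, genExt_vertex_card hU'fin hVfin hU'.2.1 hV.2.1]
      at this
  have hc2 : Pt.ncard + 1 = LC.ncard + Vm.ncard := by
    have := tree_nat_card_edge hT
    rwa [genExt_edge_card hLCmax.2.1 hVm.2.1,
      genExt_vertex_card hLCfin hVmfin hLCmax.2.1 hVm.2.1] at this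
  have hUsplit : (U \ B).ncard + (U ∩ B).ncard = U.ncard := by
    have hdis : Disjoint (U \ B) (U ∩ B) :=
      Set.disjoint_left.2 (fun x (hx : x ∈ U \ B) (hx2 : x ∈ U ∩ B) => hx.2 hx2.2)
    rw [← Set.ncard_union_eq hdis (hUfin.subset Set.diff_subset)
      (hUfin.subset Set.inter_subset_left), Set.diff_union_inter]
  have hU'card : U'.ncard = (U \ B).ncard + 1 := by
    have hdis : Disjoint (U \ B) ({m} : Set (List A)) :=
      Set.disjoint_left.2 (fun x (hx : x ∈ U \ B) (hx2 : x ∈ ({m} : Set (List A))) =>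
        hmU ((Set.mem_singleton_iff.1 hx2) ▸ hx.1))
    rw [hU'def, Set.ncard_union_eq hdis (hUfin.subset Set.diff_subset)
      (Set.finite_singleton m), Set.ncard_singleton]
  have hUB : (U ∩ B).ncard = LC.ncard := by
    have himg : U ∩ B = (fun l => l ++ m) '' LC := by
      ext x
      constructor
      · rintro ⟨hxU, c, rfl⟩
        have h1w : (c :: m) ++ w ∈ F := hU.2.1 hxU
        exact ⟨[c], ⟨c, rfl, by simpa using h1w⟩, rfl⟩
      · rintro ⟨l, hl, rfl⟩
        obtain ⟨c, rfl, -⟩ := id hl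
        exact ⟨hLCB _ hl, c, rfl⟩
    rw [himg]
    exact Set.ncard_image_of_injOn hLCinj
  refine isTree_of_connected_of_card hconn ?_
  rw [genExt_edge_card hU.2.1 hV.2.1, genExt_vertex_card hUfin hVfin hU.2.1 hV.2.1,
    ← hPgdef]
  omega
lemma revsum_eq (S : Set (List A)) (hf : S.Finite) (hf2 : (revSet S).Finite) :
    ∑ x ∈ hf2.toFinset, (x.length - 1) = ∑ x ∈ hf.toFinset, (x.length - 1) := by
  classical
  have himg : hf2.toFinset = hf.toFinset.image List.reverse := by
    ext x
    simp only [Set.Finite.mem_toFinset, Finset.mem_image, Set.Finite.mem_toFinset]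
    constructor
    · intro hx
      exact ⟨x.reverse, hx, by simp⟩
    · rintro ⟨y, hy, rfl⟩
      simpa [revSet]
  rw [himg, Finset.sum_image (fun x _ y _ h => List.reverse_injective h)]
  simp

lemma treeStmt_all (A : Type*) : ∀ n, TreeStmt A n := by
  intro n
  induction n with
  | zero =>
    intro F hF w hw U V hUfin hVfin hU hV hmeas
    have hU0 : ∑ u ∈ hUfin.toFinset, (u.length - 1) = 0 := by omega
    have hV0 : ∑ v ∈ hVfin.toFinset, (v.length - 1) = 0 := by omega
    apply base_case hF hw hU hV
    · intro u hu
      have h1 := List.length_pos_iff.2 (hU.1.1 u hu)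
      have h2 := Finset.sum_eq_zero_iff.1 hU0 u (hUfin.mem_toFinset.2 hu)
      omega
    · intro v hv
      have h1 := List.length_pos_iff.2 (hV.1.1 v hv)
      have h2 := Finset.sum_eq_zero_iff.1 hV0 v (hVfin.mem_toFinset.2 hv)
      omega
  | succ n IHn =>
    intro F hF w hw U V hUfin hVfin hU hV hmeas
    by_cases hlongU : ∃ u ∈ U, 2 ≤ u.length
    · exact step_U IHn F hF w hw U V hUfin hVfin hU hV hlongU hmeas
    by_cases hlongV : ∃ v ∈ V, 2 ≤ v.length
    · have hF' := rev_isTreeSet hF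
      have hw' : w.reverse ∈ revSet F := by
        show w.reverse.reverse ∈ F
        simpa
      have hV' := rev_max_prefix (F := F) (w := w) hV
      have hU'' := rev_max_suffix (F := F) (w := w) hU
      have hVfin' := revSet_finite hVfin
      have hUfin' := revSet_finite hUfin
      have hlong' : ∃ u ∈ revSet V, 2 ≤ u.length := by
        obtain ⟨v, hv, h2⟩ := hlongV
        exact ⟨v.reverse, show v.reverse.reverse ∈ V by simpa, by simpa⟩
      have htree' := step_U IHn (revSet F) hF' w.reverse hw' (revSet V) (revSet U)
        hVfin' hUfin' hV' hU'' hlong'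
        (by rw [revsum_eq V hVfin hVfin', revsum_eq U hUfin hUfin']; omega)
      exact isTree_of_iso (genExtRevIso F U V w) htree'
    · push_neg at hlongU hlongV
      apply base_case hF hw hU hV
      · intro u hu
        have h1 := List.length_pos_iff.2 (hU.1.1 u hu)
        have h2 := hlongU u hu
        omega
      · intro v hv
        have h1 := List.length_pos_iff.2 (hV.1.1 v hv)
        have h2 := hlongV v hv
        omega
/-- In a tree set `F`, for every `w ∈ F`, every finite `Fw⁻¹`-maximal suffix code `U` and
every finite `w⁻¹F`-maximal prefix code `V`, the generalized extension graph `G_{U,V}(w)`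
is a tree. -/
theorem genExtGraph_isTree_residual (F : Set (List A)) (hF : IsTreeSet F) (w : List A)
    (hw : w ∈ F) (U V : Set (List A)) (hUfin : U.Finite)
    (hU : IsMaximalSuffixCodeIn {s : List A | s ++ w ∈ F} U)
    (hVfin : V.Finite) (hV : IsMaximalPrefixCodeIn {p : List A | w ++ p ∈ F} V) :
    (genExtGraph F U V w).IsTree := by
  exact treeStmt_all A
    ((∑ u ∈ hUfin.toFinset, (u.length - 1)) + (∑ v ∈ hVfin.toFinset, (v.length - 1)))
    F hF w hw U V hUfin hVfin hU hV le_rfl
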